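/- Let R be a reduced elliptic root system of rank l ≥ 2 with fundamental-set Π ∪ {a} and associated maps k, g, where the affine root system W_Π·Π is of type D_{l+1}^{(2)}, k(α) = 1 for all α ∈ Π, g(α₀) = 2ℤ+1, and g(α) = ∅ for α ∈ Π ∖ {α₀}. Define L_sh, L_lg, L_ex ⊆ M = ℤδ ⊕ ℤa by α₁ + L_sh = R ∩ (α₁ + M), α₂ + L_lg = R ∩ (α₂ + M), and 2α₁ + L_ex = R ∩ (2α₁ + M). Then L_sh = M, L_lg = 2M ∪ (a + 2M), and L_ex = (2δ + a + 4M) ∪ (2δ + 3a + 4M). -/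

import Mathlib

/- ## Preliminaries: extended affine root systems (Saito) -/

noncomputable section

open Set

/-- The reflection `s_v : z ↦ z - (v^∨, z) v = z - (2 (v,z)/(v,v)) v` associated to a
bilinear form `B` and a vector `v`.  (When `B v v = 0` this is the identity, by the
`division by zero = 0` convention; reflections are only ever used at non-isotropic `v`.) -/
def srefl {V : Type*} [AddCommGroup V] [Module ℝ V]
    (B : LinearMap.BilinForm ℝ V) (v : V) : Module.End ℝ V :=
  LinearMap.id - (((2 * (B v v)⁻¹) • (B v)).smulRight v)

/-- The Weyl group `W_S` generated by the reflections in the elements of `S`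
(realized as the multiplicative closure; each generator is an involution, so this
agrees with the generated group). -/
def weyl {V : Type*} [AddCommGroup V] [Module ℝ V]
    (B : LinearMap.BilinForm ℝ V) (S : Set V) : Submonoid (Module.End ℝ V) :=
  Submonoid.closure (srefl B '' S)

/-- The orbit `W_S · α`. -/
def worbit {V : Type*} [AddCommGroup V] [Module ℝ V]
    (B : LinearMap.BilinForm ℝ V) (S : Set V) (α : V) : Set V :=
  {v | ∃ w ∈ weyl B S, w α = v}

/-- `V⁰`, the set of isotropic vectors. -/
def nullSet {V : Type*} [AddCommGroup V] [Module ℝ V]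
    (B : LinearMap.BilinForm ℝ V) : Set V := {v | B v v = 0}

/-- `ℤR`, the subgroup of `V` generated by `R`. -/
def zspan {V : Type*} [AddCommGroup V] (R : Set V) : AddSubgroup V :=
  AddSubgroup.closure R

/-- `ℤ≥0 Π`, the set of nonnegative-integer linear combinations of elements of `Π`. -/
def nnspan {V : Type*} [AddCommMonoid V] (P : Set V) : Set V :=
  (AddSubmonoid.closure P : Set V)

/-- `(R, V)` is an `n`-extended affine root system of rank `l` (K. Saito). -/
structure IsEARS {V : Type*} [AddCommGroup V] [Module ℝ V]
    (B : LinearMap.BilinForm ℝ V) (R : Set V) (l n : ℕ) : Prop where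
  rank_pos : 1 ≤ l
  findim : FiniteDimensional ℝ V
  symm : ∀ u v, B u v = B v u
  posSemidef : ∀ v, 0 ≤ B v v
  dim_eq : Module.finrank ℝ V = l + n
  null_eq : nullSet B = (LinearMap.ker B : Set V)
  dim_null : Module.finrank ℝ (LinearMap.ker B) = n
  /-- (AX1), first half -/
  root_nonisotropic : ∀ α ∈ R, B α α ≠ 0
  /-- (AX1), second half -/
  span_eq_top : Submodule.span ℝ R = ⊤
  /-- (AX2) -/
  free : Module.Free ℤ (zspan R)
  /-- (AX2) -/
  rank_eq : Module.finrank ℤ (zspan R) = l + n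
  /-- (AX3): `(α^∨, β) ∈ ℤ` -/
  integral : ∀ α ∈ R, ∀ β ∈ R, ∃ m : ℤ, 2 * B α β = (m : ℝ) * B α α
  /-- (AX4) -/
  reflect : ∀ α ∈ R, srefl B α '' R = R
  /-- (AX5) -/
  connected : ∀ S' ⊆ R, S'.Nonempty → S' ≠ R → ∃ x ∈ S', ∃ y ∈ R \ S', B x y ≠ 0

/-- `R` is reduced, i.e. `R ∩ 2R = ∅`. -/
def IsReducedRS {V : Type*} [AddCommGroup V] [Module ℝ V] (R : Set V) : Prop :=
  ∀ α ∈ R, (2 : ℤ) • α ∉ R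

/-- `Π₀` is a base (with `m` elements) of the root system `R₀`:
`Π₀ ⊆ R₀`, `Π₀` consists of `m` linearly independent elements, and
`R₀ = (R₀ ∩ ℤ≥0 Π₀) ∪ (R₀ ∩ ℤ≤0 Π₀)`. -/
def IsBaseSet {M : Type*} [AddCommGroup M] [Module ℝ M] (R₀ P₀ : Set M) (m : ℕ) : Prop :=
  P₀ ⊆ R₀ ∧ P₀.Finite ∧ P₀.ncard = m ∧
  LinearIndependent ℝ ((↑) : P₀ → M) ∧
  R₀ = (R₀ ∩ nnspan P₀) ∪ (R₀ ∩ (-(nnspan P₀)))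

/-- The bilinear form induced on a quotient `V ⧸ W` by a form vanishing on `W`. -/
def quotForm {V : Type*} [AddCommGroup V] [Module ℝ V]
    (W : Submodule ℝ V) (B : LinearMap.BilinForm ℝ V)
    (h1 : ∀ w ∈ W, B w = 0) (h2 : ∀ v : V, ∀ w ∈ W, B v w = 0) :
    LinearMap.BilinForm ℝ (V ⧸ W) :=
  Submodule.liftQ W
    { toFun := fun v => Submodule.liftQ W (B v) (fun w hw => LinearMap.mem_ker.mpr (h2 v w hw))
      map_add' := fun u v => by
        ext x
        simp
      map_smul' := fun c v => by
        ext x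
        simp }
    (fun w hw => by
      simp only [LinearMap.mem_ker]
      ext x
      simp [h1 w hw])

end

/-- A fundamental-set `Π ∪ {a}` of a reduced elliptic root system `R` of rank `l`:
(FS1) `a ∈ (ℤR)⁰` and `(ℤR)⁰ = ℤa ⊕ ℤb` for some `b`;
(FS2) `|Π| = l+1`, `Π ⊆ R` and `π_a(Π)` is a base of the affine root system `π_a(R)`. -/
def IsFundamentalSet {V : Type*} [AddCommGroup V] [Module ℝ V]
    (B : LinearMap.BilinForm ℝ V) (R : Set V) (l : ℕ) (P : Set V) (a : V) : Prop :=
  a ∈ zspan R ∧ B a a = 0 ∧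
  (∃ b : V, b ∈ zspan R ∧ B b b = 0 ∧
    ((zspan R : Set V) ∩ nullSet B = {v | ∃ m n : ℤ, v = m • a + n • b}) ∧
    (∀ m n : ℤ, m • a + n • b = 0 → m = 0 ∧ n = 0)) ∧
  P ⊆ R ∧ P.Finite ∧ P.ncard = l + 1 ∧
  IsBaseSet ((Submodule.span ℝ {a}).mkQ '' R) ((Submodule.span ℝ {a}).mkQ '' P) (l + 1)

/-- The subset `⋃_{ε=±1} ((εα + ℤ kα a) ∪ (2εα + gα·kα a))` of the plane `ℝα ⊕ ℝa`;
here `gα : Bool`, with `false` encoding `g(α) = ∅` and `true` encoding `g(α) = 2ℤ+1`. -/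
def kgLine {V : Type*} [AddCommGroup V] (a α : V) (kα : ℕ) (gα : Bool) : Set V :=
  {v | ∃ ε m : ℤ, (ε = 1 ∨ ε = -1) ∧ v = ε • α + (m * kα) • a} ∪
  {v | gα = true ∧ ∃ ε m : ℤ, (ε = 1 ∨ ε = -1) ∧ Odd m ∧ v = (2 * ε) • α + (m * kα) • a}

/-- `k : Π → ℕ` and `g : Π → {∅, 2ℤ+1}` are the maps associated to the fundamental-set
`Π ∪ {a}`, i.e. `R ∩ (ℝα ⊕ ℝa) = ⋃_{ε=±1} ((εα + ℤ k(α) a) ∪ (2εα + g(α)k(α)a))`. -/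
def IsKG {V : Type*} [AddCommGroup V] [Module ℝ V]
    (R : Set V) (a : V) (P : Set V) (k : V → ℕ) (g : V → Bool) : Prop :=
  ∀ α ∈ P, 0 < k α ∧
    R ∩ (Submodule.span ℝ {α, a} : Set V) = kgLine a α (k α) (g α)

/-- `c(α) = 1` if `g(α) = ∅`, `c(α) = 2` if `g(α) = 2ℤ+1`. -/
def cMap {V : Type*} (g : V → Bool) (α : V) : ℕ := if g α then 2 else 1

/-- `α* := c(α)·α + k(α)·a`. -/
def starMap {V : Type*} [AddCommGroup V] (a : V) (k : V → ℕ) (g : V → Bool) (α : V) : V :=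
  (cMap g α : ℤ) • α + (k α : ℤ) • a

/-- `B₊ := {α, α* | α ∈ Π}`. -/
def bplus {V : Type*} [AddCommGroup V] (a : V) (P : Set V) (k : V → ℕ) (g : V → Bool) :
    Set V :=
  P ∪ (starMap a k g '' P)

/-- `B := B₊ ∪ (−B₊)`. -/
def bfull {V : Type*} [AddCommGroup V] (a : V) (P : Set V) (k : V → ℕ) (g : V → Bool) :
    Set V :=
  bplus a P k g ∪ (-(bplus a P k g))

/-- The set `R(Π,k,g) = ⋃_{w ∈ W_Π} ⋃_{α ∈ Π} ((w(α) + ℤk(α)a) ∪ (w(2α) + g(α)k(α)a))`. -/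
def kgUnion {V : Type*} [AddCommGroup V] [Module ℝ V]
    (B : LinearMap.BilinForm ℝ V) (P : Set V) (a : V) (k : V → ℕ) (g : V → Bool) :
    Set V :=
  {v | ∃ w ∈ weyl B P, ∃ α ∈ P,
    (∃ m : ℤ, v = w α + (m * k α) • a) ∨
    (g α = true ∧ ∃ m : ℤ, Odd m ∧ v = w ((2 : ℤ) • α) + (m * k α) • a)}

noncomputable section

/-- `ω : 𝒜 → ℂ^×` is a tuning: it is nonzero on
`𝒜 = {(α,β) : (α,β^∨) = -1}` and `ω(α,β)ω(β,α) = 1` whenever also `(α^∨,β) = -1`. -/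
def IsTuning {V : Type*} [AddCommGroup V] [Module ℝ V]
    (B : LinearMap.BilinForm ℝ V) (P : Set V) (ω : V → V → ℂ) : Prop :=
  ∀ α ∈ P, ∀ β ∈ P,
    (2 * B α β = -(B β β) → ω α β ≠ 0) ∧
    (2 * B α β = -(B β β) → 2 * B α β = -(B α α) → ω α β * ω β α = 1)

/-- `δ = δ(Π)`: a positive-integer combination of the elements of `Π` with
`ℤδ = (ℤΠ)⁰`. -/
def IsDelta {V : Type*} [AddCommGroup V] [Module ℝ V]
    (B : LinearMap.BilinForm ℝ V) (P : Set V) (δ : V) : Prop :=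
  (∃ s : Finset V, (s : Set V) = P ∧
    ∃ c : V → ℕ, (∀ α ∈ s, 0 < c α) ∧ δ = ∑ α ∈ s, (c α : ℤ) • α) ∧
  (AddSubgroup.closure {δ} : Set V) = (AddSubgroup.closure P : Set V) ∩ nullSet B

end

/-- The affine root system `W_Π·Π` is of type `D_{l+1}^{(2)}`, realized (after rescaling
the form) by an enumeration `αf : Fin (l+1) → V` of `Π = {α₀, α₁, …, α_l}` with the
prescribed Gram matrix: `(α₀,α₀) = (α₁,α₁) = 1`, `(α_j,α_j) = 2` for `2 ≤ j ≤ l`,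
`(α₁,α₂) = −1`, `(α_j,α_{j+1}) = −1` for `2 ≤ j ≤ l−1`, `(α_l,α₀) = −1`, and all other
off-diagonal entries `0`. -/
def IsTypeDTwo {V : Type*} [AddCommGroup V] [Module ℝ V]
    (B : LinearMap.BilinForm ℝ V) (P : Set V) (l : ℕ) (αf : Fin (l + 1) → V) : Prop :=
  Function.Injective αf ∧ Set.range αf = P ∧
  B (αf 0) (αf 0) = 1 ∧ B (αf 1) (αf 1) = 1 ∧
  (∀ j : Fin (l + 1), 2 ≤ (j : ℕ) → B (αf j) (αf j) = 2) ∧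
  B (αf 1) (αf 2) = -1 ∧
  (∀ j : ℕ, ∀ _h2 : 2 ≤ j, ∀ _h3 : j + 1 ≤ l,
    B (αf ⟨j, by omega⟩) (αf ⟨j + 1, by omega⟩) = -1) ∧
  B (αf (Fin.last l)) (αf 0) = -1 ∧
  (∀ i j : Fin (l + 1), i ≠ j →
    ¬(({(i : ℕ), (j : ℕ)} : Finset ℕ) = {1, 2} ∨
      (∃ m : ℕ, 2 ≤ m ∧ m + 1 ≤ l ∧ ({(i : ℕ), (j : ℕ)} : Finset ℕ) = {m, m + 1}) ∨
      ({(i : ℕ), (j : ℕ)} : Finset ℕ) = {l, 0}) →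
    B (αf i) (αf j) = 0)
set_option linter.unusedSectionVars false
section Aux
open Set
variable {V : Type*} [AddCommGroup V] [Module ℝ V]
variable {B : LinearMap.BilinForm ℝ V} {R : Set V} {l : ℕ} {P : Set V} {a : V}
  {k : V → ℕ} {g : V → Bool} {αf : Fin (l + 1) → V} {δ : V}

theorem pair_iff {a b c d : ℕ} (h : ({a,b} : Finset ℕ) = {c,d}) : (a=c∧b=d)∨(a=d∧b=c) := by
  have ha : a ∈ ({c,d} : Finset ℕ) := h ▸ (by simp)
  have hb : b ∈ ({c,d} : Finset ℕ) := h ▸ (by simp)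
  have hc : c ∈ ({a,b} : Finset ℕ) := h ▸ (by simp)
  have hd : d ∈ ({a,b} : Finset ℕ) := h ▸ (by simp)
  simp at ha hb hc hd; omega

theorem refl_mem (hE : IsEARS B R l 2) {β x : V} (hβ : β ∈ R) (hx : x ∈ R)
    {t : ℝ} (ht : 2 * (B β β)⁻¹ * (B β x) = t) : x - t • β ∈ R := by
  have h := hE.reflect β hβ
  have h2 : srefl B β x ∈ R := h ▸ Set.mem_image_of_mem _ hx
  simpa [srefl, LinearMap.sub_apply, LinearMap.smulRight_apply, LinearMap.smul_apply,
    smul_eq_mul, ht] using h2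

theorem neg_mem' (hE : IsEARS B R l 2) {x : V} (hx : x ∈ R) : -x ∈ R := by
  have hne := hE.root_nonisotropic x hx
  have h := refl_mem hE hx hx (t := 2) (by field_simp)
  have e : x - (2:ℝ) • x = -x := by module
  rwa [e] at h

theorem ker_a (hE : IsEARS B R l 2) (hfs : IsFundamentalSet B R l P a) : B a = 0 := by
  have h : a ∈ nullSet B := hfs.2.1
  have : a ∈ (LinearMap.ker B : Set V) := hE.null_eq ▸ h
  simpa using this

theorem ker_δ (hE : IsEARS B R l 2) (hδ : IsDelta B P δ) : B δ = 0 := by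
  have h1 : δ ∈ (AddSubgroup.closure {δ} : Set V) := AddSubgroup.subset_closure rfl
  have h2 := hδ.2 ▸ h1
  have : δ ∈ (LinearMap.ker B : Set V) := hE.null_eq ▸ h2.2
  simpa using this

theorem B_zsmul_add (m r : ℤ) (x y : V) : B (m • x + r • y) = m • (B x) + r • (B y) := by
  simp [map_add, map_zsmul]

theorem rad_ker (hE : IsEARS B R l 2) (hfs : IsFundamentalSet B R l P a)
    (hδ : IsDelta B P δ) (m r : ℤ) : B (m • δ + r • a) = 0 := by
  rw [B_zsmul_add, ker_a hE hfs, ker_δ hE hδ]; simp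

theorem Bright (hE : IsEARS B R l 2) {σ : V} (hσ : B σ = 0) (x : V) : B x σ = 0 := by
  rw [hE.symm x σ, hσ]; simp

end Aux
section Aux2
open Set
variable {V : Type*} [AddCommGroup V] [Module ℝ V]
variable {B : LinearMap.BilinForm ℝ V} {R : Set V} {l : ℕ} {P : Set V} {a : V}
  {k : V → ℕ} {g : V → Bool} {αf : Fin (l + 1) → V} {δ : V}

/-- nat-indexed version of `αf` (0 outside range). -/
def af {l : ℕ} (αf : Fin (l + 1) → V) (i : ℕ) : V :=
  if h : i < l + 1 then αf ⟨i, h⟩ else 0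

theorem af_eq {i : ℕ} (h : i < l + 1) : af αf i = αf ⟨i, h⟩ := dif_pos h

theorem fin_v1 (hl : 2 ≤ l) : ((1 : Fin (l+1)) : ℕ) = 1 := by
  have : ((1 : Fin (l+1)) : ℕ) = 1 % (l+1) := rfl
  rw [this, Nat.mod_eq_of_lt (by omega)]

theorem fin_v2 (hl : 2 ≤ l) : ((2 : Fin (l+1)) : ℕ) = 2 := by
  have : ((2 : Fin (l+1)) : ℕ) = 2 % (l+1) := rfl
  rw [this, Nat.mod_eq_of_lt (by omega)]

theorem af_0 : af αf 0 = αf 0 := by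
  rw [af_eq (by omega)]; congr 1

theorem af_1 (hl : 2 ≤ l) : af αf 1 = αf 1 := by
  rw [af_eq (by omega)]; congr 1; exact Fin.ext (by rw [fin_v1 hl])

theorem af_2 (hl : 2 ≤ l) : af αf 2 = αf 2 := by
  rw [af_eq (by omega)]; congr 1; exact Fin.ext (by rw [fin_v2 hl])

theorem af_last : af αf l = αf (Fin.last l) := by
  rw [af_eq (by omega)]; rfl

theorem gram_zero (hD : IsTypeDTwo B P l αf) (hl : 2 ≤ l) {i j : ℕ} (hi : i ≤ l) (hj : j ≤ l)
    (h1 : i ≠ j) (h2 : ¬(i = 1 ∧ j = 2)) (h3 : ¬(i = 2 ∧ j = 1))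
    (h4 : ∀ m : ℕ, 2 ≤ m → m + 1 ≤ l → ¬((i = m ∧ j = m + 1) ∨ (i = m + 1 ∧ j = m)))
    (h5 : ¬(i = l ∧ j = 0)) (h6 : ¬(i = 0 ∧ j = l)) :
    B (af αf i) (af αf j) = 0 := by
  rw [af_eq (by omega : i < l+1), af_eq (by omega : j < l+1)]
  apply hD.2.2.2.2.2.2.2.2 ⟨i, by omega⟩ ⟨j, by omega⟩
  · exact fun hcon => h1 (by simpa using congrArg Fin.val hcon)
  · intro hadj
    simp only [Fin.val_mk] at hadj
    rcases hadj with hc | ⟨m, hm1, hm2, hc⟩ | hc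
    · rcases pair_iff hc with ⟨e1, e2⟩ | ⟨e1, e2⟩ <;> omega
    · rcases pair_iff hc with ⟨e1, e2⟩ | ⟨e1, e2⟩
      · exact h4 m hm1 hm2 (Or.inl ⟨e1, e2⟩)
      · exact h4 m hm1 hm2 (Or.inr ⟨e1, e2⟩)
    · rcases pair_iff hc with ⟨e1, e2⟩ | ⟨e1, e2⟩ <;> omega

theorem gram_00 (hD : IsTypeDTwo B P l αf) : B (af αf 0) (af αf 0) = 1 := by
  rw [af_0]; exact hD.2.2.1

theorem gram_11 (hD : IsTypeDTwo B P l αf) (hl : 2 ≤ l) : B (af αf 1) (af αf 1) = 1 := by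
  rw [af_1 hl]; exact hD.2.2.2.1

theorem gram_jj (hD : IsTypeDTwo B P l αf) {j : ℕ} (h2 : 2 ≤ j) (hj : j ≤ l) :
    B (af αf j) (af αf j) = 2 := by
  rw [af_eq (by omega : j < l+1)]
  exact hD.2.2.2.2.1 ⟨j, by omega⟩ (by simp only [Fin.val_mk]; omega)

theorem gram_12 (hD : IsTypeDTwo B P l αf) (hl : 2 ≤ l) : B (af αf 1) (af αf 2) = -1 := by
  rw [af_1 hl, af_2 hl]; exact hD.2.2.2.2.2.1

theorem gram_adj (hD : IsTypeDTwo B P l αf) {j : ℕ} (h2 : 2 ≤ j) (h3 : j + 1 ≤ l) :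
    B (af αf j) (af αf (j+1)) = -1 := by
  rw [af_eq (by omega : j < l+1), af_eq (by omega : j+1 < l+1)]
  exact hD.2.2.2.2.2.2.1 j h2 h3

theorem gram_l0 (hD : IsTypeDTwo B P l αf) : B (af αf l) (af αf 0) = -1 := by
  rw [af_last, af_0]; exact hD.2.2.2.2.2.2.2.1

theorem z_0j (hD : IsTypeDTwo B P l αf) (hl : 2 ≤ l) {j : ℕ} (hj1 : 1 ≤ j) (hj2 : j + 1 ≤ l) :
    B (af αf 0) (af αf j) = 0 := by
  apply gram_zero hD hl (by omega) (by omega) <;> omega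

theorem z_j0 (hE : IsEARS B R l 2) (hD : IsTypeDTwo B P l αf) (hl : 2 ≤ l) {j : ℕ}
    (hj1 : 1 ≤ j) (hj2 : j + 1 ≤ l) : B (af αf j) (af αf 0) = 0 := by
  rw [hE.symm]; exact z_0j hD hl hj1 hj2

theorem z_far (hD : IsTypeDTwo B P l αf) (hl : 2 ≤ l) {i j : ℕ} (hi : 1 ≤ i) (hij : i + 2 ≤ j)
    (hj : j ≤ l) : B (af αf i) (af αf j) = 0 := by
  apply gram_zero hD hl (by omega) (by omega) <;> omega

theorem z_far' (hE : IsEARS B R l 2) (hD : IsTypeDTwo B P l αf) (hl : 2 ≤ l) {i j : ℕ}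
    (hi : 1 ≤ i) (hij : i + 2 ≤ j) (hj : j ≤ l) : B (af αf j) (af αf i) = 0 := by
  rw [hE.symm]; exact z_far hD hl hi hij hj

theorem gram_21 (hE : IsEARS B R l 2) (hD : IsTypeDTwo B P l αf) (hl : 2 ≤ l) :
    B (af αf 2) (af αf 1) = -1 := by rw [hE.symm]; exact gram_12 hD hl

theorem gram_adj' (hE : IsEARS B R l 2) (hD : IsTypeDTwo B P l αf) {j : ℕ} (h2 : 2 ≤ j)
    (h3 : j + 1 ≤ l) : B (af αf (j+1)) (af αf j) = -1 := by
  rw [hE.symm]; exact gram_adj hD h2 h3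

theorem gram_0l (hE : IsEARS B R l 2) (hD : IsTypeDTwo B P l αf) :
    B (af αf 0) (af αf l) = -1 := by rw [hE.symm]; exact gram_l0 hD

end Aux2
section Aux3
open Set Finset
variable {V : Type*} [AddCommGroup V] [Module ℝ V]
variable {B : LinearMap.BilinForm ℝ V} {R : Set V} {l : ℕ} {P : Set V} {a : V}
  {k : V → ℕ} {g : V → Bool} {αf : Fin (l + 1) → V} {δ : V}

/-- The sum of all the `αf i`. -/
def Dsum {l : ℕ} (αf : Fin (l + 1) → V) : V := ∑ i : Fin (l + 1), αf i

theorem Dsum_eq : Dsum αf = ∑ i ∈ range (l + 1), af αf i := by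
  rw [Dsum, ← Fin.sum_univ_eq_sum_range]
  exact Finset.sum_congr rfl fun i _ => by rw [af_eq i.isLt, Fin.eta]

theorem gram_sub1 (hE : IsEARS B R l 2) (hD : IsTypeDTwo B P l αf) (hl : 2 ≤ l)
    {i : ℕ} (h2 : 2 ≤ i) (hi : i ≤ l) : B (af αf i) (af αf (i - 1)) = -1 := by
  rcases Nat.eq_or_lt_of_le h2 with h | h
  · rw [← h]; exact gram_21 hE hD hl
  · have : i - 1 + 1 = i := by omega
    rw [← this]; exact gram_adj' hE hD (by omega) (by omega)

theorem row_sum (hE : IsEARS B R l 2) (hD : IsTypeDTwo B P l αf) (hl : 2 ≤ l)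
    {i : ℕ} (hi : i ≤ l) : B (af αf i) (Dsum αf) = 0 := by
  rw [Dsum_eq, map_sum]
  have key : ∀ (j₁ j₂ j₃ : ℕ) (v₁ v₂ v₃ : ℝ), j₁ ≠ j₂ → j₁ ≠ j₃ → j₂ ≠ j₃ →
      j₁ < l + 1 → j₂ < l + 1 → j₃ < l + 1 →
      (∀ j ∈ range (l+1), B (af αf i) (af αf j) =
        (if j = j₁ then v₁ else 0) + (if j = j₂ then v₂ else 0) + (if j = j₃ then v₃ else 0)) →
      v₁ + v₂ + v₃ = 0 → ∑ j ∈ range (l+1), B (af αf i) (af αf j) = 0 := by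
    intro j₁ j₂ j₃ v₁ v₂ v₃ h12 h13 h23 m1 m2 m3 hf hv
    rw [Finset.sum_congr rfl hf, Finset.sum_add_distrib, Finset.sum_add_distrib,
      Finset.sum_ite_eq' (range (l+1)), Finset.sum_ite_eq' (range (l+1)),
      Finset.sum_ite_eq' (range (l+1)), if_pos (Finset.mem_range.mpr m1),
      if_pos (Finset.mem_range.mpr m2), if_pos (Finset.mem_range.mpr m3), hv]
  rcases Nat.lt_or_ge i 2 with h2 | h2
  · interval_cases i
    · apply key 0 l 1 1 (-1) 0 (by omega) (by omega) (by omega) (by omega) (by omega) (by omega)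
        _ (by ring)
      intro j hj; simp only [Finset.mem_range] at hj
      by_cases e0 : j = 0
      · subst e0; rw [if_pos rfl, if_neg (by omega), if_neg (by omega), gram_00 hD]; ring
      · by_cases el : j = l
        · subst el; rw [if_neg e0, if_pos rfl, if_neg (by omega), gram_0l hE hD]; ring
        · rw [if_neg e0, if_neg el, ite_self, z_0j hD hl (by omega) (by omega)]; ring
    · apply key 1 2 0 1 (-1) 0 (by omega) (by omega) (by omega) (by omega) (by omega) (by omega)
        _ (by ring)
      intro j hj; simp only [Finset.mem_range] at hj
      by_cases e1 : j = 1
      · subst e1; rw [if_pos rfl, if_neg (by omega), if_neg (by omega), gram_11 hD hl]; ring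
      · by_cases e2 : j = 2
        · subst e2; rw [if_neg e1, if_pos rfl, if_neg (by omega), gram_12 hD hl]; ring
        · rw [if_neg e1, if_neg e2]
          by_cases e0 : j = 0
          · subst e0; rw [if_pos rfl, z_j0 hE hD hl (by omega) (by omega)]; ring
          · rw [if_neg e0, z_far hD hl (by omega) (by omega) (by omega)]; ring
  · rcases Nat.eq_or_lt_of_le hi with hel | hlt
    · -- i = l : neighbours l-1 and 0
      subst hel
      apply key (i-1) i 0 (-1) 2 (-1) (by omega) (by omega) (by omega) (by omega) (by omega)
        (by omega) _ (by ring)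
      intro j hj; simp only [Finset.mem_range] at hj
      by_cases em : j = i - 1
      · subst em
        rw [if_pos rfl, if_neg (by omega), if_neg (by omega), gram_sub1 hE hD hl h2 (by omega)]
        ring
      · by_cases ei : j = i
        · subst ei
          rw [if_neg em, if_pos rfl, if_neg (by omega), gram_jj hD h2 (by omega)]; ring
        · by_cases e0 : j = 0
          · subst e0; rw [if_neg em, if_neg ei, if_pos rfl, gram_l0 hD]; ring
          · rw [if_neg em, if_neg ei, if_neg e0]
            rcases Nat.lt_or_ge j (i-1) with hcase | hcase
            · rw [z_far' hE hD hl (by omega) (by omega) (by omega)]; ring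
            · omega
    · -- 2 ≤ i < l : neighbours i-1 and i+1
      apply key (i-1) i (i+1) (-1) 2 (-1) (by omega) (by omega) (by omega) (by omega) (by omega)
        (by omega) _ (by ring)
      intro j hj; simp only [Finset.mem_range] at hj
      by_cases em : j = i - 1
      · subst em
        rw [if_pos rfl, if_neg (by omega), if_neg (by omega), gram_sub1 hE hD hl h2 (by omega)]
        ring
      · by_cases ei : j = i
        · subst ei
          rw [if_neg em, if_pos rfl, if_neg (by omega), gram_jj hD h2 (by omega)]; ring
        · by_cases ep : j = i + 1
          · subst ep
            rw [if_neg em, if_neg ei, if_pos rfl, gram_adj hD h2 (by omega)]; ring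
          · rw [if_neg em, if_neg ei, if_neg ep]
            by_cases e0 : j = 0
            · subst e0; rw [z_j0 hE hD hl (by omega) (by omega)]; ring
            · rcases Nat.lt_or_ge j i with hcase | hcase
              · rw [z_far' hE hD hl (by omega) (by omega) (by omega)]; ring
              · rw [z_far hD hl (by omega) (by omega) (by omega)]; ring

theorem Dsum_ker (hE : IsEARS B R l 2) (hD : IsTypeDTwo B P l αf) (hl : 2 ≤ l) :
    B (Dsum αf) (Dsum αf) = 0 := by
  have h0 : B (Dsum αf) = ∑ i ∈ range (l+1), B (af αf i) := by
    rw [Dsum_eq, map_sum]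
  rw [h0, LinearMap.sum_apply]
  exact Finset.sum_eq_zero fun i hi => row_sum hE hD hl (by
    simpa using Nat.lt_succ_iff.mp (Finset.mem_range.mp hi))

end Aux3
section Aux4
open Set Finset
variable {V : Type*} [AddCommGroup V] [Module ℝ V]
variable {B : LinearMap.BilinForm ℝ V} {R : Set V} {l : ℕ} {P : Set V} {a : V}
  {k : V → ℕ} {g : V → Bool} {αf : Fin (l + 1) → V} {δ : V}

theorem diag_ge1 (hD : IsTypeDTwo B P l αf) (hl : 2 ≤ l) (i : Fin (l + 1)) :
    1 ≤ B (αf i) (αf i) := by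
  by_cases h : 2 ≤ (i : ℕ)
  · rw [hD.2.2.2.2.1 i h]; norm_num
  · rcases (by omega : (i:ℕ) = 0 ∨ (i:ℕ) = 1) with h0 | h1
    · have : i = 0 := Fin.ext (by simpa using h0)
      rw [this, hD.2.2.1]
    · have : i = 1 := Fin.ext (by rw [h1, fin_v1 hl])
      rw [this, hD.2.2.2.1]

theorem offdiag_nonpos (hE : IsEARS B R l 2) (hD : IsTypeDTwo B P l αf) (hl : 2 ≤ l)
    {i j : Fin (l + 1)} (hne : i ≠ j) : B (αf i) (αf j) ≤ 0 := by
  have hij : (i : ℕ) ≠ (j : ℕ) := fun h => hne (Fin.ext h)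
  have hi : (i : ℕ) ≤ l := by omega
  have hj : (j : ℕ) ≤ l := by omega
  have repr : B (αf i) (αf j) = B (af αf (i : ℕ)) (af αf (j : ℕ)) := by
    rw [af_eq i.isLt, af_eq j.isLt, Fin.eta, Fin.eta]
  rw [repr]
  by_cases c1 : ((i:ℕ) = 1 ∧ (j:ℕ) = 2) ∨ ((i:ℕ) = 2 ∧ (j:ℕ) = 1)
  · rcases c1 with ⟨e1, e2⟩ | ⟨e1, e2⟩
    · rw [e1, e2, gram_12 hD hl]; norm_num
    · rw [e1, e2, gram_21 hE hD hl]; norm_num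
  · by_cases c2 : ∃ m, 2 ≤ m ∧ m + 1 ≤ l ∧
        (((i:ℕ) = m ∧ (j:ℕ) = m + 1) ∨ ((i:ℕ) = m + 1 ∧ (j:ℕ) = m))
    · obtain ⟨m, hm1, hm2, hc⟩ := c2
      rcases hc with ⟨e1, e2⟩ | ⟨e1, e2⟩
      · rw [e1, e2, gram_adj hD hm1 hm2]; norm_num
      · rw [e1, e2, gram_adj' hE hD hm1 hm2]; norm_num
    · by_cases c3 : ((i:ℕ) = l ∧ (j:ℕ) = 0) ∨ ((i:ℕ) = 0 ∧ (j:ℕ) = l)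
      · rcases c3 with ⟨e1, e2⟩ | ⟨e1, e2⟩
        · rw [e1, e2, gram_l0 hD]; norm_num
        · rw [e1, e2, gram_0l hE hD]; norm_num
      · rw [gram_zero hD hl hi hj hij (by tauto) (by tauto)
          (fun m hm1 hm2 hc => c2 ⟨m, hm1, hm2, hc⟩) (by tauto) (by tauto)]

theorem qinj (hE : IsEARS B R l 2) (hfs : IsFundamentalSet B R l P a)
    (hD : IsTypeDTwo B P l αf) (hl : 2 ≤ l) :
    Function.Injective (fun i : Fin (l + 1) => (Submodule.span ℝ {a}).mkQ (αf i)) := by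
  intro i j h
  by_contra hne
  have hW : αf i - αf j ∈ Submodule.span ℝ {a} := (Submodule.Quotient.eq _).mp h
  obtain ⟨c, hc⟩ := Submodule.mem_span_singleton.mp hW
  have hB := congrArg (fun x => B x (αf i)) hc
  simp only [map_smul, LinearMap.smul_apply, map_sub, LinearMap.sub_apply] at hB
  rw [ker_a hE hfs] at hB
  simp only [LinearMap.zero_apply, smul_eq_mul, mul_zero] at hB
  have h1 : (1:ℝ) ≤ B (αf i) (αf i) := diag_ge1 hD hl i
  have h2 : B (αf j) (αf i) ≤ 0 := offdiag_nonpos hE hD hl (Ne.symm hne)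
  linarith [hB]

theorem indepQ (hE : IsEARS B R l 2) (hfs : IsFundamentalSet B R l P a)
    (hD : IsTypeDTwo B P l αf) (hl : 2 ≤ l) :
    LinearIndependent ℝ (fun i : Fin (l + 1) => (Submodule.span ℝ {a}).mkQ (αf i)) := by
  have hBase := hfs.2.2.2.2.2.2
  have hli := hBase.2.2.2.1
  have hmem : ∀ i : Fin (l+1), (Submodule.span ℝ {a}).mkQ (αf i)
      ∈ ((Submodule.span ℝ {a}).mkQ '' P) :=
    fun i => ⟨αf i, hD.2.1 ▸ Set.mem_range_self i, rfl⟩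
  have heq : (fun i : Fin (l + 1) => (Submodule.span ℝ {a}).mkQ (αf i))
      = Subtype.val ∘ (fun i => (⟨_, hmem i⟩ :
        ((Submodule.span ℝ {a}).mkQ '' P : Set (V ⧸ Submodule.span ℝ {a})))) := rfl
  rw [heq]
  exact hli.comp _ (fun i j h => qinj hE hfs hD hl (congrArg Subtype.val h))

theorem delta_eq (hE : IsEARS B R l 2) (hfs : IsFundamentalSet B R l P a)
    (hδ : IsDelta B P δ) (hD : IsTypeDTwo B P l αf) (hl : 2 ≤ l) :
    δ = Dsum αf := by
  classical
  obtain ⟨⟨s, hsP, c, hcpos, hδsum⟩, hδcl⟩ := hδ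
  have hs : s = Finset.image αf Finset.univ := by
    apply Finset.coe_injective
    rw [Finset.coe_image, Finset.coe_univ, Set.image_univ, hsP, hD.2.1]
  have hδsum' : δ = ∑ i : Fin (l+1), (c (αf i) : ℤ) • αf i := by
    rw [hδsum, hs, Finset.sum_image (fun x _ y _ h => hD.1 h)]
  have hDin : Dsum αf ∈ (AddSubgroup.closure ({δ} : Set V) : Set V) := by
    rw [hδcl]
    refine ⟨AddSubgroup.sum_mem _ (fun i _ =>
      AddSubgroup.subset_closure (hD.2.1 ▸ Set.mem_range_self i)), ?_⟩
    exact Dsum_ker hE hD hl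
  obtain ⟨n, hn⟩ := AddSubgroup.mem_closure_singleton.mp hDin
  have hveq : ∑ i : Fin (l+1), ((n * (c (αf i) : ℤ) - 1) • αf i) = 0 := by
    have h1 : n • δ = ∑ i : Fin (l+1), (n * (c (αf i) : ℤ)) • αf i := by
      rw [hδsum', Finset.smul_sum]
      exact Finset.sum_congr rfl fun i _ => (mul_smul n _ _).symm
    have h2 : ∑ i : Fin (l+1), ((n * (c (αf i) : ℤ) - 1) • αf i)
        = n • δ - Dsum αf := by
      rw [h1, Dsum, ← Finset.sum_sub_distrib]
      exact Finset.sum_congr rfl fun i _ => by rw [sub_smul, one_smul]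
    rw [h2, hn, sub_self]
  have hq : ∑ i : Fin (l+1), (((n * (c (αf i) : ℤ) - 1 : ℤ) : ℝ)
      • (Submodule.span ℝ {a}).mkQ (αf i)) = 0 := by
    have := congrArg (Submodule.span ℝ {a}).mkQ hveq
    rw [map_sum, map_zero] at this
    rw [← this]
    exact Finset.sum_congr rfl fun i _ => by
      rw [map_zsmul, Int.cast_smul_eq_zsmul]
  have hcoef := Fintype.linearIndependent_iff.mp (indepQ hE hfs hD hl) _ hq
  have hc1 : ∀ i : Fin (l+1), (c (αf i) : ℤ) = 1 := by
    intro i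
    have h0 : ((n * (c (αf i) : ℤ) - 1 : ℤ) : ℝ) = 0 := hcoef i
    have h1 : n * (c (αf i) : ℤ) = 1 := by exact_mod_cast sub_eq_zero.mp (by exact_mod_cast h0)
    rcases (Int.mul_eq_one_iff_eq_one_or_neg_one.mp h1) with ⟨_, h⟩ | ⟨_, h⟩
    · exact h
    · have : (0:ℤ) ≤ (c (αf i) : ℤ) := Int.ofNat_nonneg _
      omega
  rw [hδsum', Dsum]
  exact Finset.sum_congr rfl fun i _ => by rw [hc1 i, one_smul]

end Aux4
section Aux5
open Set Finset
variable {V : Type*} [AddCommGroup V] [Module ℝ V]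
variable {B : LinearMap.BilinForm ℝ V} {R : Set V} {l : ℕ} {P : Set V} {a : V}
  {k : V → ℕ} {g : V → Bool} {αf : Fin (l + 1) → V} {δ : V}

theorem af_mem_P (hD : IsTypeDTwo B P l αf) (i : Fin (l + 1)) : αf i ∈ P :=
  hD.2.1 ▸ Set.mem_range_self i

theorem base_mem (hkg : IsKG R a P k g) (hk1 : ∀ α ∈ P, k α = 1)
    (hD : IsTypeDTwo B P l αf) (i : Fin (l + 1)) (ε n : ℤ) (hε : ε = 1 ∨ ε = -1) :
    ε • αf i + n • a ∈ R := by
  have hP : αf i ∈ P := af_mem_P hD i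
  have h := (hkg _ hP).2
  have hin : ε • αf i + n • a ∈ kgLine a (αf i) (k (αf i)) (g (αf i)) := by
    left
    exact ⟨ε, n, hε, by rw [hk1 _ hP]; norm_num⟩
  rw [← h] at hin
  exact hin.1

theorem ex_mem0 (hkg : IsKG R a P k g) (hk1 : ∀ α ∈ P, k α = 1)
    (hD : IsTypeDTwo B P l αf) (hg0 : g (αf 0) = true) (n : ℤ) (hn : Odd n) :
    (2:ℤ) • αf 0 + n • a ∈ R := by
  have hP : αf 0 ∈ P := af_mem_P hD 0
  have h := (hkg _ hP).2
  have hin : (2:ℤ) • αf 0 + n • a ∈ kgLine a (αf 0) (k (αf 0)) (g (αf 0)) := by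
    right
    exact ⟨hg0, 1, n, Or.inl rfl, hn, by rw [hk1 _ hP]; norm_num⟩
  rw [← h] at hin
  exact hin.1

theorem coeff_eq (hE : IsEARS B R l 2) {α : V} (hα : B α α ≠ 0) {c₁ c₂ : ℤ} {σ₁ σ₂ : V}
    (h₁ : B σ₁ = 0) (h₂ : B σ₂ = 0) (h : c₁ • α + σ₁ = c₂ • α + σ₂) : c₁ = c₂ := by
  have hB := congrArg (fun x => B x α) h
  simp only [map_add, LinearMap.add_apply] at hB
  rw [h₁, h₂] at hB
  simp only [LinearMap.zero_apply, add_zero] at hB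
  have h2 : ((c₁ : ℝ)) * B α α = ((c₂ : ℝ)) * B α α := by
    have e : ∀ c : ℤ, B (c • α) α = (c:ℝ) * B α α := fun c => by
      rw [map_zsmul]; simp [smul_eq_mul]
    rw [e c₁, e c₂] at hB; exact hB
  exact_mod_cast mul_right_cancel₀ hα h2

theorem fin1_ne_zero (hl : 2 ≤ l) : (1 : Fin (l+1)) ≠ 0 := by
  intro h
  have := congrArg Fin.val h
  rw [fin_v1 hl] at this
  simp at this

theorem plane1 (hE : IsEARS B R l 2) (hfs : IsFundamentalSet B R l P a)
    (hkg : IsKG R a P k g) (hk1 : ∀ α ∈ P, k α = 1) (hD : IsTypeDTwo B P l αf)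
    (hgi : ∀ i : Fin (l + 1), i ≠ 0 → g (αf i) = false) (hl : 2 ≤ l)
    (c n : ℤ) (hc : c = 2 ∨ c = -2) : c • αf 1 + n • a ∉ R := by
  intro hmem
  have hP : αf 1 ∈ P := af_mem_P hD 1
  have hsp : c • αf 1 + n • a ∈ (Submodule.span ℝ {αf 1, a} : Submodule ℝ V) :=
    Submodule.add_mem _
      (zsmul_mem (Submodule.subset_span (by simp)) c)
      (zsmul_mem (Submodule.subset_span (by simp)) n)
  have hkl : c • αf 1 + n • a ∈ kgLine a (αf 1) (k (αf 1)) (g (αf 1)) := by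
    rw [← (hkg _ hP).2]
    exact ⟨hmem, hsp⟩
  rcases hkl with ⟨ε, m, hε, heq⟩ | ⟨hg, _⟩
  · have hcε : c = ε := by
      apply coeff_eq hE (α := αf 1) (by rw [hD.2.2.2.1]; norm_num)
          (σ₁ := n • a) (σ₂ := (m * (k (αf 1) : ℤ)) • a) ?_ ?_ heq
      · rw [map_zsmul, ker_a hE hfs]; simp
      · rw [map_zsmul, ker_a hE hfs]; simp
    omega
  · rw [hgi 1 (fin1_ne_zero hl)] at hg
    exact Bool.false_ne_true hg

end Aux5
section Aux6
open Set Finset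
variable {V : Type*} [AddCommGroup V] [Module ℝ V]
variable {B : LinearMap.BilinForm ℝ V} {R : Set V} {l : ℕ} {P : Set V} {a : V}
  {k : V → ℕ} {g : V → Bool} {αf : Fin (l + 1) → V} {δ : V}

theorem af_mem_R (hfs : IsFundamentalSet B R l P a) (hD : IsTypeDTwo B P l αf)
    {i : ℕ} (hi : i ≤ l) : af αf i ∈ R := by
  rw [af_eq (by omega : i < l + 1)]
  exact hfs.2.2.2.1 (af_mem_P hD _)

theorem chainT (hE : IsEARS B R l 2) (hfs : IsFundamentalSet B R l P a)
    (hD : IsTypeDTwo B P l αf) (hl : 2 ≤ l) (c : ℤ) (ρ : V) (hρ : B ρ = 0)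
    (hbase : c • af αf 0 + ρ ∈ R) :
    ∀ d : ℕ, d ≤ l - 1 →
      c • af αf 0 + c • (∑ i ∈ Finset.Icc (l+1-d) l, af αf i) + ρ ∈ R := by
  intro d
  induction d with
  | zero =>
    intro _
    rw [Finset.Icc_eq_empty (by omega), Finset.sum_empty, smul_zero, add_zero]
    exact hbase
  | succ d ih =>
    intro hd
    have hx := ih (by omega)
    have hβR : af αf (l - d) ∈ R := af_mem_R hfs hD (by omega)
    have hnorm : B (af αf (l-d)) (af αf (l-d)) = 2 := gram_jj hD (by omega) (by omega)
    have hBx : B (af αf (l-d))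
        (c • af αf 0 + c • (∑ i ∈ Finset.Icc (l+1-d) l, af αf i) + ρ) = -(c:ℝ) := by
      rw [map_add, map_add, map_zsmul, map_zsmul, map_sum, Bright hE hρ]
      rcases Nat.eq_zero_or_pos d with h0 | h1
      · subst h0
        rw [Finset.Icc_eq_empty (by omega), Finset.sum_empty]
        have : l - 0 = l := by omega
        rw [this, gram_l0 hD]
        simp only [zsmul_eq_mul]; push_cast; ring
      · rw [z_j0 hE hD hl (by omega) (by omega)]
        have hsum : (∑ i ∈ Finset.Icc (l+1-d) l, B (af αf (l-d)) (af αf i)) = -1 := by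
          rw [Finset.sum_eq_single_of_mem (l+1-d)
            (Finset.mem_Icc.mpr (by omega))]
          · have he : l + 1 - d = (l - d) + 1 := by omega
            rw [he]; exact gram_adj hD (by omega) (by omega)
          · intro i hi hne
            simp only [Finset.mem_Icc] at hi
            exact z_far hD hl (by omega) (by omega) (by omega)
        rw [hsum]
        simp only [zsmul_eq_mul]; push_cast; ring
    have hrefl := refl_mem hE hβR hx
      (t := -(c:ℝ)) (by rw [hnorm, hBx]; push_cast; ring)
    have hins : Finset.Icc (l-d) l = insert (l-d) (Finset.Icc (l+1-d) l) := by
      ext i; simp only [Finset.mem_Icc, Finset.mem_insert]; omega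
    have hid : l + 1 - (d+1) = l - d := by omega
    rw [hid, hins, Finset.sum_insert (by simp only [Finset.mem_Icc]; omega)]
    have heq : (c • af αf 0 + c • (∑ i ∈ Finset.Icc (l+1-d) l, af αf i) + ρ)
        - (-(c:ℝ)) • af αf (l-d)
        = c • af αf 0 + c • (af αf (l-d) + ∑ i ∈ Finset.Icc (l+1-d) l, af αf i) + ρ := by
      simp only [← Int.cast_smul_eq_zsmul ℝ]
      push_cast
      module
    rwa [heq] at hrefl

theorem Dsum_decomp (hl : 2 ≤ l) :
    Dsum αf = af αf 0 + af αf 1 + ∑ i ∈ Finset.Icc 2 l, af αf i := by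
  rw [Dsum_eq]
  have h1 : Finset.range (l+1) = insert 0 (insert 1 (Finset.Icc 2 l)) := by
    ext i; simp only [Finset.mem_range, Finset.mem_insert, Finset.mem_Icc]; omega
  rw [h1, Finset.sum_insert (by simp only [Finset.mem_insert, Finset.mem_Icc]; omega),
    Finset.sum_insert (by simp only [Finset.mem_Icc]; omega)]
  abel

theorem genShort (hE : IsEARS B R l 2) (hfs : IsFundamentalSet B R l P a)
    (hδ : IsDelta B P δ) (hD : IsTypeDTwo B P l αf) (hl : 2 ≤ l)
    (c : ℤ) (ρ : V) (hρ : B ρ = 0) (hbase : c • αf 0 + ρ ∈ R) :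
    c • δ + c • αf 1 + ρ ∈ R := by
  have hb' : c • af αf 0 + ρ ∈ R := by rw [af_0]; exact hbase
  have h := chainT hE hfs hD hl c ρ hρ hb' (l-1) le_rfl
  have h2 : l + 1 - (l-1) = 2 := by omega
  rw [h2] at h
  have hβR : af αf 1 ∈ R := af_mem_R hfs hD (by omega)
  have hnorm : B (af αf 1) (af αf 1) = 1 := gram_11 hD hl
  have hBx : B (af αf 1)
      (c • af αf 0 + c • (∑ i ∈ Finset.Icc 2 l, af αf i) + ρ) = -(c:ℝ) := by
    rw [map_add, map_add, map_zsmul, map_zsmul, map_sum, Bright hE hρ]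
    rw [hE.symm (af αf 1) (af αf 0), z_0j hD hl (by omega) (by omega)]
    have hsum : (∑ i ∈ Finset.Icc 2 l, B (af αf 1) (af αf i)) = -1 := by
      rw [Finset.sum_eq_single_of_mem 2 (Finset.mem_Icc.mpr (by omega))]
      · exact gram_12 hD hl
      · intro i hi hne
        simp only [Finset.mem_Icc] at hi
        exact z_far hD hl (by omega) (by omega) (by omega)
    rw [hsum]
    simp only [zsmul_eq_mul]; push_cast; ring
  have hrefl := refl_mem hE hβR h
    (t := -(2*(c:ℝ))) (by rw [hnorm, hBx]; push_cast; ring)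
  have heq : (c • af αf 0 + c • (∑ i ∈ Finset.Icc 2 l, af αf i) + ρ)
      - (-(2*(c:ℝ))) • af αf 1 = c • δ + c • αf 1 + ρ := by
    rw [delta_eq hE hfs hδ hD hl, Dsum_decomp hl, ← af_1 (αf := αf) hl]
    simp only [← Int.cast_smul_eq_zsmul ℝ]
    push_cast
    module
  rwa [heq] at hrefl

theorem rho_a (hE : IsEARS B R l 2) (hfs : IsFundamentalSet B R l P a) (n : ℤ) :
    B (n • a) = 0 := by rw [map_zsmul, ker_a hE hfs]; simp

theorem sh1 (hE : IsEARS B R l 2) (hfs : IsFundamentalSet B R l P a)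
    (hδ : IsDelta B P δ) (hkg : IsKG R a P k g) (hk1 : ∀ α ∈ P, k α = 1)
    (hD : IsTypeDTwo B P l αf) (hl : 2 ≤ l) (n : ℤ) :
    δ + αf 1 + n • a ∈ R := by
  have h := genShort hE hfs hδ hD hl 1 (n • a) (rho_a hE hfs n)
    (by simpa using base_mem hkg hk1 hD 0 1 n (Or.inl rfl))
  simpa using h

theorem exgen (hE : IsEARS B R l 2) (hfs : IsFundamentalSet B R l P a)
    (hδ : IsDelta B P δ) (hkg : IsKG R a P k g) (hk1 : ∀ α ∈ P, k α = 1)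
    (hD : IsTypeDTwo B P l αf) (hg0 : g (αf 0) = true) (hl : 2 ≤ l) (n : ℤ) (hn : Odd n) :
    (2:ℤ) • δ + (2:ℤ) • αf 1 + n • a ∈ R :=
  genShort hE hfs hδ hD hl 2 (n • a) (rho_a hE hfs n) (ex_mem0 hkg hk1 hD hg0 n hn)

end Aux6
section Aux7
open Set Finset
variable {V : Type*} [AddCommGroup V] [Module ℝ V]
variable {B : LinearMap.BilinForm ℝ V} {R : Set V} {l : ℕ} {P : Set V} {a : V}
  {k : V → ℕ} {g : V → Bool} {αf : Fin (l + 1) → V} {δ : V}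

theorem alpha1_mem (hkg : IsKG R a P k g) (hk1 : ∀ α ∈ P, k α = 1)
    (hD : IsTypeDTwo B P l αf) : αf 1 ∈ R := by
  simpa using base_mem hkg hk1 hD 1 1 0 (Or.inl rfl)

theorem alpha2_mem (hkg : IsKG R a P k g) (hk1 : ∀ α ∈ P, k α = 1)
    (hD : IsTypeDTwo B P l αf) : αf 2 ∈ R := by
  simpa using base_mem hkg hk1 hD 2 1 0 (Or.inl rfl)

theorem beta1_mem (hE : IsEARS B R l 2) (hfs : IsFundamentalSet B R l P a)
    (hδ : IsDelta B P δ) (hkg : IsKG R a P k g) (hk1 : ∀ α ∈ P, k α = 1)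
    (hD : IsTypeDTwo B P l αf) (hl : 2 ≤ l) : αf 1 + δ ∈ R := by
  have h := sh1 hE hfs hδ hkg hk1 hD hl 0
  have heq : δ + αf 1 + (0:ℤ) • a = αf 1 + δ := by simp; abel
  rwa [heq] at h

theorem Bδ_left (hE : IsEARS B R l 2) (hδ : IsDelta B P δ) (y : V) : B δ y = 0 := by
  rw [ker_δ hE hδ]; simp

theorem Bδ_right (hE : IsEARS B R l 2) (hδ : IsDelta B P δ) (y : V) : B y δ = 0 :=
  Bright hE (ker_δ hE hδ) y

theorem Bnorm_beta1 (hE : IsEARS B R l 2) (hδ : IsDelta B P δ)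
    (hD : IsTypeDTwo B P l αf) : B (αf 1 + δ) (αf 1 + δ) = 1 := by
  simp only [map_add, LinearMap.add_apply, Bδ_left hE hδ, Bδ_right hE hδ, hD.2.2.2.1]
  norm_num

theorem step_up (hE : IsEARS B R l 2) (hfs : IsFundamentalSet B R l P a)
    (hδ : IsDelta B P δ) (hkg : IsKG R a P k g) (hk1 : ∀ α ∈ P, k α = 1)
    (hD : IsTypeDTwo B P l αf) (hl : 2 ≤ l) {y : V} (hy : y ∈ R) (p : ℤ)
    (hp : B (αf 1) y = (p:ℝ)) : y + (2*p) • δ ∈ R := by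
  have r1 := refl_mem hE (alpha1_mem hkg hk1 hD) hy (t := 2*(p:ℝ))
    (by rw [hD.2.2.2.1, hp]; ring)
  have hB2 : B (αf 1 + δ) (y - (2*(p:ℝ)) • αf 1) = -(p:ℝ) := by
    simp only [map_add, LinearMap.add_apply, Bδ_left hE hδ, map_sub, map_smul, hp,
      hD.2.2.2.1, smul_eq_mul]
    ring
  have r2 := refl_mem hE (beta1_mem hE hfs hδ hkg hk1 hD hl) r1 (t := -(2*(p:ℝ)))
    (by rw [Bnorm_beta1 hE hδ hD, hB2]; ring)
  have heq : (y - (2*(p:ℝ)) • αf 1) - (-(2*(p:ℝ))) • (αf 1 + δ) = y + (2*p) • δ := by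
    simp only [← Int.cast_smul_eq_zsmul ℝ]
    push_cast
    module
  rwa [heq] at r2

theorem step_down (hE : IsEARS B R l 2) (hfs : IsFundamentalSet B R l P a)
    (hδ : IsDelta B P δ) (hkg : IsKG R a P k g) (hk1 : ∀ α ∈ P, k α = 1)
    (hD : IsTypeDTwo B P l αf) (hl : 2 ≤ l) {y : V} (hy : y ∈ R) (p : ℤ)
    (hp : B (αf 1) y = (p:ℝ)) : y - (2*p) • δ ∈ R := by
  have hB1 : B (αf 1 + δ) y = (p:ℝ) := by
    simp only [map_add, LinearMap.add_apply, Bδ_left hE hδ, hp]; ring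
  have r1 := refl_mem hE (beta1_mem hE hfs hδ hkg hk1 hD hl) hy (t := 2*(p:ℝ))
    (by rw [Bnorm_beta1 hE hδ hD, hB1]; ring)
  have hB2 : B (αf 1) (y - (2*(p:ℝ)) • (αf 1 + δ)) = -(p:ℝ) := by
    simp only [map_sub, map_smul, map_add, Bδ_right hE hδ, hp, hD.2.2.2.1, smul_eq_mul]
    ring
  have r2 := refl_mem hE (alpha1_mem hkg hk1 hD) r1 (t := -(2*(p:ℝ)))
    (by rw [hD.2.2.2.1, hB2]; ring)
  have heq : (y - (2*(p:ℝ)) • (αf 1 + δ)) - (-(2*(p:ℝ))) • αf 1 = y - (2*p) • δ := by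
    simp only [← Int.cast_smul_eq_zsmul ℝ]
    push_cast
    module
  rwa [heq] at r2

theorem shiftδ (hE : IsEARS B R l 2) (hfs : IsFundamentalSet B R l P a)
    (hδ : IsDelta B P δ) (hkg : IsKG R a P k g) (hk1 : ∀ α ∈ P, k α = 1)
    (hD : IsTypeDTwo B P l αf) (hl : 2 ≤ l) {x : V} (hx : x ∈ R) (p : ℤ)
    (hp : B (αf 1) x = (p:ℝ)) (t : ℤ) : x + (2*p*t) • δ ∈ R := by
  induction t using Int.induction_on with
  | zero => simpa using hx
  | succ t ht =>
    have hBy : B (αf 1) (x + (2*p*t) • δ) = (p:ℝ) := by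
      rw [map_add, map_zsmul, Bδ_right hE hδ, hp]; simp
    have h := step_up hE hfs hδ hkg hk1 hD hl ht p hBy
    have heq : (x + (2*p*(t:ℤ)) • δ) + (2*p) • δ = x + (2*p*((t:ℤ)+1)) • δ := by
      simp only [← Int.cast_smul_eq_zsmul ℝ]
      push_cast
      module
    rwa [heq] at h
  | pred t ht =>
    have hBy : B (αf 1) (x + (2*p*(-(t:ℤ))) • δ) = (p:ℝ) := by
      rw [map_add, map_zsmul, Bδ_right hE hδ, hp]; simp
    have h := step_down hE hfs hδ hkg hk1 hD hl ht p hBy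
    have heq : (x + (2*p*(-(t:ℤ))) • δ) - (2*p) • δ = x + (2*p*(-(t:ℤ)-1)) • δ := by
      simp only [← Int.cast_smul_eq_zsmul ℝ]
      push_cast
      module
    rwa [heq] at h

end Aux7
section Aux8
open Set Finset
variable {V : Type*} [AddCommGroup V] [Module ℝ V]
variable {B : LinearMap.BilinForm ℝ V} {R : Set V} {l : ℕ} {P : Set V} {a : V}
  {k : V → ℕ} {g : V → Bool} {αf : Fin (l + 1) → V} {δ : V}

theorem Ba_right (hE : IsEARS B R l 2) (hfs : IsFundamentalSet B R l P a) (y : V) :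
    B y a = 0 := Bright hE (ker_a hE hfs) y

theorem sh_mem (hE : IsEARS B R l 2) (hfs : IsFundamentalSet B R l P a)
    (hδ : IsDelta B P δ) (hkg : IsKG R a P k g) (hk1 : ∀ α ∈ P, k α = 1)
    (hD : IsTypeDTwo B P l αf) (hl : 2 ≤ l) (m r : ℤ) :
    αf 1 + (m • δ + r • a) ∈ R := by
  rcases Int.even_or_odd m with ⟨t, hm⟩ | ⟨t, hm⟩
  · have hx0 : αf 1 + r • a ∈ R := by simpa using base_mem hkg hk1 hD 1 1 r (Or.inl rfl)
    have hp : B (αf 1) (αf 1 + r • a) = ((1:ℤ):ℝ) := by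
      rw [map_add, hD.2.2.2.1, map_zsmul, Ba_right hE hfs]; simp
    have h := shiftδ hE hfs hδ hkg hk1 hD hl hx0 1 hp t
    have heq : (αf 1 + r • a) + (2*1*t) • δ = αf 1 + (m • δ + r • a) := by
      simp only [← Int.cast_smul_eq_zsmul ℝ]
      push_cast [hm]
      module
    rwa [heq] at h
  · have hx0 : δ + αf 1 + r • a ∈ R := sh1 hE hfs hδ hkg hk1 hD hl r
    have hp : B (αf 1) (δ + αf 1 + r • a) = ((1:ℤ):ℝ) := by
      rw [map_add, map_add, hD.2.2.2.1, map_zsmul, Ba_right hE hfs, Bδ_right hE hδ]; simp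
    have h := shiftδ hE hfs hδ hkg hk1 hD hl hx0 1 hp t
    have heq : (δ + αf 1 + r • a) + (2*1*t) • δ = αf 1 + (m • δ + r • a) := by
      simp only [← Int.cast_smul_eq_zsmul ℝ]
      push_cast [hm]
      module
    rwa [heq] at h

theorem lg_mem (hE : IsEARS B R l 2) (hfs : IsFundamentalSet B R l P a)
    (hδ : IsDelta B P δ) (hkg : IsKG R a P k g) (hk1 : ∀ α ∈ P, k α = 1)
    (hD : IsTypeDTwo B P l αf) (hl : 2 ≤ l) (m r : ℤ) :
    αf 2 + ((2*m) • δ + r • a) ∈ R := by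
  have hx0 : αf 2 + r • a ∈ R := by simpa using base_mem hkg hk1 hD 2 1 r (Or.inl rfl)
  have hp : B (αf 1) (αf 2 + r • a) = ((-1:ℤ):ℝ) := by
    rw [map_add, hD.2.2.2.2.2.1, map_zsmul, Ba_right hE hfs]; simp
  have h := shiftδ hE hfs hδ hkg hk1 hD hl hx0 (-1) hp (-m)
  have heq : (αf 2 + r • a) + (2*(-1)*(-m)) • δ = αf 2 + ((2*m) • δ + r • a) := by
    simp only [← Int.cast_smul_eq_zsmul ℝ]
    push_cast
    module
  rwa [heq] at h

theorem ex_mem (hE : IsEARS B R l 2) (hfs : IsFundamentalSet B R l P a)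
    (hδ : IsDelta B P δ) (hkg : IsKG R a P k g) (hk1 : ∀ α ∈ P, k α = 1)
    (hD : IsTypeDTwo B P l αf) (hg0 : g (αf 0) = true) (hl : 2 ≤ l) (m r : ℤ) (hr : Odd r) :
    (2:ℤ) • αf 1 + ((4*m+2) • δ + r • a) ∈ R := by
  have hx0 := exgen hE hfs hδ hkg hk1 hD hg0 hl r hr
  have hp : B (αf 1) ((2:ℤ) • δ + (2:ℤ) • αf 1 + r • a) = ((2:ℤ):ℝ) := by
    rw [map_add, map_add, map_zsmul, map_zsmul, map_zsmul, hD.2.2.2.1,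
      Ba_right hE hfs, Bδ_right hE hδ]
    simp
  have h := shiftδ hE hfs hδ hkg hk1 hD hl hx0 2 hp m
  have heq : ((2:ℤ) • δ + (2:ℤ) • αf 1 + r • a) + (2*2*m) • δ
      = (2:ℤ) • αf 1 + ((4*m+2) • δ + r • a) := by
    simp only [← Int.cast_smul_eq_zsmul ℝ]
    push_cast
    module
  rwa [heq] at h

end Aux8
section Aux9
open Set Finset
variable {V : Type*} [AddCommGroup V] [Module ℝ V]
variable {B : LinearMap.BilinForm ℝ V} {R : Set V} {l : ℕ} {P : Set V} {a : V}
  {k : V → ℕ} {g : V → Bool} {αf : Fin (l + 1) → V} {δ : V}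

theorem col_sum (hE : IsEARS B R l 2) (hD : IsTypeDTwo B P l αf) (hl : 2 ≤ l)
    {i : ℕ} (hi : i ≤ l) : B (Dsum αf) (af αf i) = 0 := by
  rw [hE.symm]; exact row_sum hE hD hl hi

theorem icc2_insert (hl : 2 ≤ l) : Finset.Icc 2 l = insert 2 (Finset.Icc 3 l) := by
  ext i; simp only [Finset.mem_Icc, Finset.mem_insert]; omega

theorem hdec (hl : 2 ≤ l) :
    af αf 2 + (2:ℤ) • af αf 1 + ∑ i ∈ Finset.Icc 3 l, af αf i
      = Dsum αf + af αf 1 - af αf 0 := by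
  rw [Dsum_decomp hl, icc2_insert hl,
    Finset.sum_insert (by simp only [Finset.mem_Icc]; omega)]
  simp only [← Int.cast_smul_eq_zsmul ℝ]
  push_cast
  module

theorem lg_not (hE : IsEARS B R l 2)
    (hfs : IsFundamentalSet B R l P a) (hδ : IsDelta B P δ) (hkg : IsKG R a P k g)
    (hk1 : ∀ α ∈ P, k α = 1) (hD : IsTypeDTwo B P l αf)
    (hg0 : g (αf 0) = true) (hgi : ∀ i : Fin (l + 1), i ≠ 0 → g (αf i) = false)
    (hl : 2 ≤ l) (m r : ℤ) (hm : Odd m) : αf 2 + (m • δ + r • a) ∉ R := by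
  intro hx
  set σ : V := m • δ + r • a with hσdef
  have hσ : B σ = 0 := rad_ker hE hfs hδ m r
  have hσ' : ∀ y, B σ y = 0 := fun y => by rw [hσ]; simp
  have norm22 : B (αf 2) (αf 2) = 2 := hD.2.2.2.2.1 2 (by rw [fin_v2 hl])
  -- step 1 : reflect in α₂
  have r1 := refl_mem hE (alpha2_mem hkg hk1 hD) hx (t := 2)
    (by rw [norm22, map_add, norm22, Bright hE hσ]; norm_num)
  have e1 : (αf 2 + σ) - (2:ℝ) • αf 2 = σ - αf 2 := by push_cast; module
  rw [e1] at r1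
  -- step 2 : reflect in α₁
  have r2 := refl_mem hE (alpha1_mem hkg hk1 hD) r1 (t := 2)
    (by rw [hD.2.2.2.1, map_sub, Bright hE hσ, hD.2.2.2.2.2.1]; norm_num)
  have e2 : (σ - αf 2) - (2:ℝ) • αf 1
      = σ - (af αf 2 + (2:ℤ) • af αf 1 + ∑ i ∈ Finset.Icc 3 2, af αf i) := by
    rw [Finset.Icc_eq_empty (by omega), Finset.sum_empty, af_1 hl, af_2 hl]
    simp only [← Int.cast_smul_eq_zsmul ℝ]
    push_cast
    module
  rw [e2] at r2
  -- step 3 : strip α₃, …, α_l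
  have hchain : ∀ j, 2 ≤ j → j ≤ l →
      σ - (af αf 2 + (2:ℤ) • af αf 1 + ∑ i ∈ Finset.Icc 3 j, af αf i) ∈ R := by
    intro j hj2
    induction j, hj2 using Nat.le_induction with
    | base => intro _; exact r2
    | succ j hj ih =>
      intro hjl
      have hprev := ih (by omega)
      have hβ : af αf (j+1) ∈ R := af_mem_R hfs hD (by omega)
      have hnorm : B (af αf (j+1)) (af αf (j+1)) = 2 := gram_jj hD (by omega) (by omega)
      have hBj : B (af αf (j+1))
          (σ - (af αf 2 + (2:ℤ) • af αf 1 + ∑ i ∈ Finset.Icc 3 j, af αf i)) = 1 := by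
        rw [map_sub, Bright hE hσ, map_add, map_add, map_zsmul, map_sum]
        rcases Nat.eq_or_lt_of_le hj with hj2' | hj3
        · -- j = 2
          rw [← hj2', Finset.Icc_eq_empty (by omega), Finset.sum_empty]
          have h32 : B (af αf (2+1)) (af αf 2) = -1 := gram_adj' hE hD (by omega) (by omega)
          have h31 : B (af αf (2+1)) (af αf 1) = 0 := z_far' hE hD hl (by omega) (by omega) (by omega)
          rw [h32, h31]
          simp only [zsmul_eq_mul]; push_cast; ring
        · -- j ≥ 3
          have h2 : B (af αf (j+1)) (af αf 2) = 0 :=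
            z_far' hE hD hl (by omega) (by omega) (by omega)
          have h1 : B (af αf (j+1)) (af αf 1) = 0 :=
            z_far' hE hD hl (by omega) (by omega) (by omega)
          have hsum : (∑ i ∈ Finset.Icc 3 j, B (af αf (j+1)) (af αf i)) = -1 := by
            rw [Finset.sum_eq_single_of_mem j (Finset.mem_Icc.mpr (by omega))]
            · exact gram_adj' hE hD (by omega) (by omega)
            · intro i hi hne
              simp only [Finset.mem_Icc] at hi
              exact z_far' hE hD hl (by omega) (by omega) (by omega)
          rw [h2, h1, hsum]
          simp only [zsmul_eq_mul]; push_cast; ring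
      have rr := refl_mem hE hβ hprev (t := 1) (by rw [hnorm, hBj]; norm_num)
      have heq : (σ - (af αf 2 + (2:ℤ) • af αf 1 + ∑ i ∈ Finset.Icc 3 j, af αf i))
          - (1:ℝ) • af αf (j+1)
          = σ - (af αf 2 + (2:ℤ) • af αf 1 + ∑ i ∈ Finset.Icc 3 (j+1), af αf i) := by
        rw [Finset.sum_Icc_succ_top (by omega : 3 ≤ j+1)]
        simp only [← Int.cast_smul_eq_zsmul ℝ]
        push_cast
        module
      rwa [heq] at rr
  have hZl := hchain l hl le_rfl
  rw [hdec hl] at hZl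
  -- step 5 : reflect in α₀
  have hβ0 : af αf 0 ∈ R := af_mem_R hfs hD (by omega)
  have hnorm0 : B (af αf 0) (af αf 0) = 1 := gram_00 hD
  have hB5 : B (af αf 0) (σ - (Dsum αf + af αf 1 - af αf 0)) = 1 := by
    simp only [map_sub, map_add, Bright hE hσ, row_sum hE hD hl (by omega : (0:ℕ) ≤ l),
      z_0j hD hl (by omega : 1 ≤ 1) (by omega : 1 + 1 ≤ l), gram_00 hD]
    ring
  have r5 := refl_mem hE hβ0 hZl (t := 2) (by rw [hnorm0, hB5]; norm_num)
  have e5 : (σ - (Dsum αf + af αf 1 - af αf 0)) - (2:ℝ) • af αf 0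
      = σ - Dsum αf - af αf 1 - af αf 0 := by push_cast; module
  rw [e5] at r5
  -- step 6 : negate
  have r6 := neg_mem' hE r5
  have e6 : -(σ - Dsum αf - af αf 1 - af αf 0) = Dsum αf + af αf 1 + af αf 0 - σ := by
    module
  rw [e6] at r6
  -- step 7 : reflect 2α₀ + a in w
  have hu : (2:ℤ) • αf 0 + (1:ℤ) • a ∈ R := ex_mem0 hkg hk1 hD hg0 1 odd_one
  have hww : B (Dsum αf + af αf 1 + af αf 0 - σ) (Dsum αf + af αf 1 + af αf 0 - σ) = 2 := by
    simp only [map_add, map_sub, LinearMap.add_apply, LinearMap.sub_apply,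
      Dsum_ker hE hD hl, col_sum hE hD hl (by omega : (1:ℕ) ≤ l),
      col_sum hE hD hl (by omega : (0:ℕ) ≤ l),
      row_sum hE hD hl (by omega : (1:ℕ) ≤ l), row_sum hE hD hl (by omega : (0:ℕ) ≤ l),
      Bright hE hσ, hσ', gram_11 hD hl, gram_00 hD,
      z_j0 hE hD hl (by omega : 1 ≤ 1) (by omega : 1 + 1 ≤ l),
      z_0j hD hl (by omega : 1 ≤ 1) (by omega : 1 + 1 ≤ l)]
    ring
  have hwu : B (Dsum αf + af αf 1 + af αf 0 - σ) ((2:ℤ) • αf 0 + (1:ℤ) • a) = 2 := by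
    rw [← af_0 (αf := αf)]
    have expand : ∀ y : V, B y ((2:ℤ) • af αf 0 + (1:ℤ) • a)
        = 2 * B y (af αf 0) + B y a := by
      intro y; rw [map_add, map_zsmul, map_zsmul]; simp [smul_eq_mul]
    rw [expand]
    rw [Ba_right hE hfs]
    simp only [map_add, map_sub, LinearMap.add_apply, LinearMap.sub_apply,
      col_sum hE hD hl (by omega : (0:ℕ) ≤ l), gram_00 hD, hσ',
      z_j0 hE hD hl (by omega : 1 ≤ 1) (by omega : 1 + 1 ≤ l)]
    ring
  have r7 := refl_mem hE r6 hu (t := 2) (by rw [hww, hwu]; norm_num)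
  -- step 8 : identify the result and shift
  have e7 : ((2:ℤ) • αf 0 + (1:ℤ) • a) - (2:ℝ) • (Dsum αf + af αf 1 + af αf 0 - σ)
      = (-2:ℤ) • αf 1 + ((2*m-2) • δ + (2*r+1) • a) := by
    rw [← delta_eq hE hfs hδ hD hl, af_1 hl, af_0, hσdef]
    simp only [← Int.cast_smul_eq_zsmul ℝ]
    push_cast
    module
  rw [e7] at r7
  obtain ⟨q, hq⟩ := hm
  have hpe : B (αf 1) ((-2:ℤ) • αf 1 + ((2*m-2) • δ + (2*r+1) • a)) = ((-2:ℤ):ℝ) := by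
    rw [map_add, map_add, map_zsmul, map_zsmul, map_zsmul, hD.2.2.2.1,
      Bδ_right hE hδ, Ba_right hE hfs]
    simp
  have hsh := shiftδ hE hfs hδ hkg hk1 hD hl r7 (-2) hpe q
  have e8 : ((-2:ℤ) • αf 1 + ((2*m-2) • δ + (2*r+1) • a)) + (2*(-2)*q) • δ
      = (-2:ℤ) • αf 1 + (2*r+1) • a := by
    simp only [← Int.cast_smul_eq_zsmul ℝ]
    push_cast [hq]
    module
  rw [e8] at hsh
  exact plane1 hE hfs hkg hk1 hD hgi hl (-2) (2*r+1) (Or.inr rfl) hsh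

theorem ex_not_odd (hE : IsEARS B R l 2)
    (hfs : IsFundamentalSet B R l P a) (hδ : IsDelta B P δ) (hkg : IsKG R a P k g)
    (hk1 : ∀ α ∈ P, k α = 1) (hD : IsTypeDTwo B P l αf)
    (hg0 : g (αf 0) = true) (hgi : ∀ i : Fin (l + 1), i ≠ 0 → g (αf i) = false)
    (hl : 2 ≤ l) (m r : ℤ) (hm : Odd m)
    (hu : (2:ℤ) • αf 1 + (m • δ + r • a) ∈ R) : False := by
  set σ : V := m • δ + r • a with hσdef
  have hσ : B σ = 0 := rad_ker hE hfs hδ m r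
  have hσ' : ∀ y, B σ y = 0 := fun y => by rw [hσ]; simp
  -- reflect α₂ in u
  have huu : B ((2:ℤ) • αf 1 + σ) ((2:ℤ) • αf 1 + σ) = 4 := by
    simp only [map_add, map_zsmul, LinearMap.add_apply, LinearMap.smul_apply,
      Bright hE hσ, hσ', hD.2.2.2.1, smul_eq_mul, zsmul_eq_mul]
    push_cast; ring
  have hux : B ((2:ℤ) • αf 1 + σ) (αf 2) = -2 := by
    simp only [map_add, map_zsmul, LinearMap.add_apply, LinearMap.smul_apply,
      hσ', hD.2.2.2.2.2.1, smul_eq_mul, zsmul_eq_mul]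
    push_cast; ring
  have r1 := refl_mem hE hu (alpha2_mem hkg hk1 hD) (t := -1)
    (by rw [huu, hux]; norm_num)
  have e1 : αf 2 - (-1:ℝ) • ((2:ℤ) • αf 1 + σ) = (αf 2 + (2:ℤ) • αf 1) + σ := by
    simp only [← Int.cast_smul_eq_zsmul ℝ]
    push_cast
    module
  rw [e1] at r1
  -- reflect in α₁
  have hB2 : B (αf 1) ((αf 2 + (2:ℤ) • αf 1) + σ) = 1 := by
    rw [map_add, map_add, map_zsmul, Bright hE hσ, hD.2.2.2.2.2.1, hD.2.2.2.1]
    simp only [zsmul_eq_mul]; push_cast; ring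
  have r2 := refl_mem hE (alpha1_mem hkg hk1 hD) r1 (t := 2)
    (by rw [hD.2.2.2.1, hB2]; norm_num)
  have e2 : ((αf 2 + (2:ℤ) • αf 1) + σ) - (2:ℝ) • αf 1 = αf 2 + σ := by
    simp only [← Int.cast_smul_eq_zsmul ℝ]
    push_cast
    module
  rw [e2] at r2
  exact lg_not hE hfs hδ hkg hk1 hD hg0 hgi hl m r hm r2

theorem ex_not_mul4 (hE : IsEARS B R l 2)
    (hfs : IsFundamentalSet B R l P a) (hδ : IsDelta B P δ) (hkg : IsKG R a P k g)
    (hk1 : ∀ α ∈ P, k α = 1) (hD : IsTypeDTwo B P l αf)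
    (hgi : ∀ i : Fin (l + 1), i ≠ 0 → g (αf i) = false)
    (hl : 2 ≤ l) (m r q : ℤ) (hm : m = 4*q)
    (hu : (2:ℤ) • αf 1 + (m • δ + r • a) ∈ R) : False := by
  have hp : B (αf 1) ((2:ℤ) • αf 1 + (m • δ + r • a)) = ((2:ℤ):ℝ) := by
    rw [map_add, map_add, map_zsmul, map_zsmul, map_zsmul, hD.2.2.2.1,
      Bδ_right hE hδ, Ba_right hE hfs]
    simp
  have hsh := shiftδ hE hfs hδ hkg hk1 hD hl hu 2 hp (-q)
  have e : ((2:ℤ) • αf 1 + (m • δ + r • a)) + (2*2*(-q)) • δ = (2:ℤ) • αf 1 + r • a := by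
    simp only [← Int.cast_smul_eq_zsmul ℝ]
    push_cast [hm]
    module
  rw [e] at hsh
  exact plane1 hE hfs hkg hk1 hD hgi hl 2 r (Or.inl rfl) hsh

theorem ex_not_even_r (hE : IsEARS B R l 2) (hred : IsReducedRS R)
    (hfs : IsFundamentalSet B R l P a) (hδ : IsDelta B P δ) (hkg : IsKG R a P k g)
    (hk1 : ∀ α ∈ P, k α = 1) (hD : IsTypeDTwo B P l αf)
    (hl : 2 ≤ l) (m r m1 r1 : ℤ) (hm : m = 2*m1) (hr : r = 2*r1)
    (hu : (2:ℤ) • αf 1 + (m • δ + r • a) ∈ R) : False := by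
  have hin := sh_mem hE hfs hδ hkg hk1 hD hl m1 r1
  apply hred _ hin
  have e : (2:ℤ) • (αf 1 + (m1 • δ + r1 • a)) = (2:ℤ) • αf 1 + (m • δ + r • a) := by
    simp only [← Int.cast_smul_eq_zsmul ℝ]
    push_cast [hm, hr]
    module
  rwa [e]

end Aux9

/-- For the elliptic root system of type `D_{l+1}^{(2)}` with
`k ≡ 1`, `g(α₀) = 2ℤ+1` and `g(α) = ∅` otherwise:
`L_sh = M`, `L_lg = 2M ∪ (a + 2M)` and `L_ex = (2δ + a + 4M) ∪ (2δ + 3a + 4M)`,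
where `M = ℤδ ⊕ ℤa` and `α₁ + L_sh = R ∩ (α₁ + M)`, `α₂ + L_lg = R ∩ (α₂ + M)`,
`2α₁ + L_ex = R ∩ (2α₁ + M)`. -/
theorem stmt17 {V : Type*} [AddCommGroup V] [Module ℝ V]
    (B : LinearMap.BilinForm ℝ V) (R : Set V) (l : ℕ) (hl : 2 ≤ l)
    (hE : IsEARS B R l 2) (hred : IsReducedRS R)
    (P : Set V) (a : V) (hfs : IsFundamentalSet B R l P a)
    (k : V → ℕ) (g : V → Bool) (hkg : IsKG R a P k g)
    (αf : Fin (l + 1) → V) (hD : IsTypeDTwo B P l αf)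
    (hk1 : ∀ α ∈ P, k α = 1)
    (hg0 : g (αf 0) = true) (hgi : ∀ i : Fin (l + 1), i ≠ 0 → g (αf i) = false)
    (δ : V) (hδ : IsDelta B P δ) :
    -- `L_sh = M`
    {σ : V | (∃ m r : ℤ, σ = m • δ + r • a) ∧ αf 1 + σ ∈ R}
        = {v : V | ∃ m r : ℤ, v = m • δ + r • a} ∧
    -- `L_lg = 2M ∪ (a + 2M)`
    {σ : V | (∃ m r : ℤ, σ = m • δ + r • a) ∧ αf 2 + σ ∈ R}
        = {v : V | ∃ m r : ℤ,
            v = (2 * m) • δ + (2 * r) • a ∨ v = (2 * m) • δ + (2 * r + 1) • a} ∧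
    -- `L_ex = (2δ + a + 4M) ∪ (2δ + 3a + 4M)`
    {σ : V | (∃ m r : ℤ, σ = m • δ + r • a) ∧ (2 : ℤ) • αf 1 + σ ∈ R}
        = {v : V | ∃ m r : ℤ,
            v = (4 * m + 2) • δ + (4 * r + 1) • a ∨
            v = (4 * m + 2) • δ + (4 * r + 3) • a} := by
  refine ⟨?_, ?_, ?_⟩
  · ext σ
    simp only [Set.mem_setOf_eq]
    constructor
    · rintro ⟨h, _⟩; exact h
    · rintro ⟨m, r, h⟩
      exact ⟨⟨m, r, h⟩, by rw [h]; exact sh_mem hE hfs hδ hkg hk1 hD hl m r⟩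
  · ext σ
    simp only [Set.mem_setOf_eq]
    constructor
    · rintro ⟨⟨m, r, hσ⟩, hroot⟩
      subst hσ
      rcases Int.even_or_odd m with ⟨m1, hm⟩ | ho
      · rcases Int.even_or_odd r with ⟨r1, hr⟩ | ⟨r1, hr⟩
        · exact ⟨m1, r1, Or.inl (by rw [show m = 2*m1 by omega, show r = 2*r1 by omega])⟩
        · exact ⟨m1, r1, Or.inr (by rw [show m = 2*m1 by omega, show r = 2*r1+1 by omega])⟩
      · exact absurd hroot (lg_not hE hfs hδ hkg hk1 hD hg0 hgi hl m r ho)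
    · rintro ⟨m, r, h | h⟩
      · exact ⟨⟨2*m, 2*r, h⟩, by rw [h]; exact lg_mem hE hfs hδ hkg hk1 hD hl m (2*r)⟩
      · exact ⟨⟨2*m, 2*r+1, h⟩, by rw [h]; exact lg_mem hE hfs hδ hkg hk1 hD hl m (2*r+1)⟩
  · ext σ
    simp only [Set.mem_setOf_eq]
    constructor
    · rintro ⟨⟨m, r, hσ⟩, hroot⟩
      subst hσ
      rcases Int.even_or_odd m with ⟨m1, hm⟩ | ho
      · rcases Int.even_or_odd m1 with ⟨m2, hm2⟩ | ⟨m2, hm2⟩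
        · exact (ex_not_mul4 hE hfs hδ hkg hk1 hD hgi hl m r m2 (by omega) hroot).elim
        · rcases Int.even_or_odd r with ⟨r1, hr⟩ | ⟨r1, hr⟩
          · exact (ex_not_even_r hE hred hfs hδ hkg hk1 hD hl m r m1 r1 (by omega)
              (by omega) hroot).elim
          · rcases Int.even_or_odd r1 with ⟨r2, hr2⟩ | ⟨r2, hr2⟩
            · exact ⟨m2, r2, Or.inl
                (by rw [show m = 4*m2+2 by omega, show r = 4*r2+1 by omega])⟩
            · exact ⟨m2, r2, Or.inr
                (by rw [show m = 4*m2+2 by omega, show r = 4*r2+3 by omega])⟩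
      · exact (ex_not_odd hE hfs hδ hkg hk1 hD hg0 hgi hl m r ho hroot).elim
    · rintro ⟨m, r, h | h⟩
      · refine ⟨⟨4*m+2, 4*r+1, h⟩, ?_⟩
        rw [h]
        exact ex_mem hE hfs hδ hkg hk1 hD hg0 hl m (4*r+1) ⟨2*r, by ring⟩
      · refine ⟨⟨4*m+2, 4*r+3, h⟩, ?_⟩
        rw [h]
        exact ex_mem hE hfs hδ hkg hk1 hD hg0 hl m (4*r+3) ⟨2*r+1, by ring⟩
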